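/- For every graph G of order n, Γ_d(G) ≤ n − α'(G), where α'(G) is the matching number of G. -/

import Mathlib

/-- An orientation of a simple graph `G`: each edge gets exactly one direction. -/
def IsOrientation {V : Type*} (G : SimpleGraph V) (o : V → V → Prop) : Prop :=
  (∀ u v, o u v → G.Adj u v) ∧
  (∀ u v, G.Adj u v → (o u v ∨ o v u)) ∧
  (∀ u v, o u v → ¬ o v u)

/-- A directed dominating set: every vertex outside `S` has an in-neighbor in `S`. -/
def IsDirDomSet {V : Type*} (o : V → V → Prop) (S : Set V) : Prop :=
  ∀ v, v ∉ S → ∃ u ∈ S, o u v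

/-- The directed domination number of a digraph (orientation). -/
noncomputable def dirDomNum (V : Type*) [Fintype V] (o : V → V → Prop) : ℕ :=
  sInf {n | ∃ S : Finset V, S.card = n ∧ IsDirDomSet o ↑S}

/-- The (upper) directed domination number of a graph: the maximum of `dirDomNum`
over all orientations. -/
noncomputable def GammaD {V : Type*} [Fintype V] (G : SimpleGraph V) : ℕ :=
  sSup {n | ∃ o, IsOrientation G o ∧ dirDomNum V o = n}

/-- The independence number of a graph. -/
noncomputable def indepNum {V : Type*} [Fintype V] (G : SimpleGraph V) : ℕ :=
  sSup {n | ∃ S : Finset V, S.card = n ∧ ∀ u ∈ S, ∀ w ∈ S, u ≠ w → ¬ G.Adj u w}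

/-- The matching number of a graph. -/
noncomputable def matchNum {V : Type*} [Fintype V] (G : SimpleGraph V) : ℕ :=
  sSup {n | ∃ M : G.Subgraph, M.IsMatching ∧ M.edgeSet.ncard = n}

section Aux

open Classical in
/-- For any orientation and any matching, the directed domination number is at most
`n - (size of matching)`. -/
lemma dirDomNum_le_of_matching {V : Type*} [Fintype V] {G : SimpleGraph V}
    {o : V → V → Prop} (ho : IsOrientation G o) (M : G.Subgraph) (hM : M.IsMatching) :
    dirDomNum V o ≤ Fintype.card V - M.edgeSet.ncard := by
  classical
  obtain ⟨ho1, ho2, ho3⟩ := ho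
  -- partner function
  have hpart : ∀ v ∈ M.verts, ∃ w, M.Adj v w := fun v hv => (hM hv).exists
  set p : V → V := fun v => if h : ∃ w, M.Adj v w then h.choose else v with hp
  have hpadj : ∀ {v}, v ∈ M.verts → M.Adj v (p v) := by
    intro v hv
    have h : ∃ w, M.Adj v w := hpart v hv
    simp only [hp, dif_pos h]
    exact h.choose_spec
  have hpuniq : ∀ {v w}, M.Adj v w → p v = w := by
    intro v w hvw
    have hv : v ∈ M.verts := M.edge_vert hvw
    exact (hM hv).unique (hpadj hv) hvw
  -- heads
  set H : Set V := {v | ∃ u, M.Adj u v ∧ o u v} with hH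
  -- f maps each head to its edge, bijectively onto the edge set
  set f : V → Sym2 V := fun v => s(p v, v) with hf
  have hmaps : Set.MapsTo f H M.edgeSet := by
    rintro v ⟨u, huv, hov⟩
    have : p v = u := hpuniq huv.symm
    simp only [hf, Set.mem_setOf_eq, this]
    exact (SimpleGraph.Subgraph.mem_edgeSet).2 huv
  have hinj : Set.InjOn f H := by
    rintro v ⟨u, huv, hov⟩ v' ⟨u', huv', hov'⟩ hfv
    have hpv : p v = u := hpuniq huv.symm
    have hpv' : p v' = u' := hpuniq huv'.symm
    simp only [hf, hpv, hpv', Sym2.eq, Sym2.rel_iff', Prod.mk.injEq, Prod.swap_prod_mk] at hfv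
    rcases hfv with ⟨_, h⟩ | ⟨h1, h2⟩
    · exact h
    · exact absurd (h2 ▸ hov') (ho3 _ _ (h1 ▸ hov))
  have hsurj : Set.SurjOn f H M.edgeSet := by
    rintro e he
    induction e with
    | h a b =>
      have hab : M.Adj a b := (SimpleGraph.Subgraph.mem_edgeSet).1 he
      rcases ho2 a b (M.adj_sub hab) with hoab | hoba
      · refine ⟨b, ⟨a, hab, hoab⟩, ?_⟩
        have : p b = a := hpuniq hab.symm
        simp [hf, this]
      · refine ⟨a, ⟨b, hab.symm, hoba⟩, ?_⟩
        have : p a = b := hpuniq hab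
        simp [hf, this, Sym2.eq_swap]
  have himg : f '' H = M.edgeSet := Set.Subset.antisymm hmaps.image_subset hsurj
  have hcardH : H.ncard = M.edgeSet.ncard := by
    rw [← himg, Set.ncard_image_of_injOn hinj]
  -- the complement of H is a dominating set
  have hdom : IsDirDomSet o (Hᶜ : Set V) := by
    intro v hv
    have hvH : v ∈ H := by simpa using hv
    obtain ⟨u, huv, hov⟩ := hvH
    refine ⟨u, ?_, hov⟩
    intro hu
    obtain ⟨w, hwu, how⟩ := hu
    have h1 : p u = v := hpuniq huv
    have h2 : p u = w := hpuniq hwu.symm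
    exact ho3 u v hov (h1 ▸ h2 ▸ how)
  -- conclude
  have hfinH : H.Finite := Set.toFinite _
  have hfinHc : (Hᶜ : Set V).Finite := Set.toFinite _
  have hmem : (Hᶜ : Set V).ncard ∈ {n | ∃ S : Finset V, S.card = n ∧ IsDirDomSet o ↑S} := by
    refine ⟨hfinHc.toFinset, ?_, ?_⟩
    · exact (Set.ncard_eq_toFinset_card _ hfinHc).symm
    · intro v hv
      have : v ∉ (Hᶜ : Set V) := by simpa using hv
      obtain ⟨u, hu, hou⟩ := hdom v this
      exact ⟨u, by simpa using hu, hou⟩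
  have hle : dirDomNum V o ≤ (Hᶜ : Set V).ncard := Nat.sInf_le hmem
  have hcompl : H.ncard + (Hᶜ : Set V).ncard = Fintype.card V := by
    rw [Set.ncard_add_ncard_compl, Nat.card_eq_fintype_card]
  omega

end Aux

theorem stmt7 {V : Type*} [Fintype V] (G : SimpleGraph V) :
    GammaD G ≤ Fintype.card V - matchNum G := by
  classical
  -- the matching number is attained
  have hne : {n | ∃ M : G.Subgraph, M.IsMatching ∧ M.edgeSet.ncard = n}.Nonempty := by
    refine ⟨0, ⊥, ?_, ?_⟩
    · intro v hv
      simp [SimpleGraph.Subgraph.verts_bot] at hv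
    · simp [SimpleGraph.Subgraph.edgeSet_bot]
  have hbdd : BddAbove {n | ∃ M : G.Subgraph, M.IsMatching ∧ M.edgeSet.ncard = n} := by
    refine ⟨Nat.card (Sym2 V), ?_⟩
    rintro n ⟨M, _, rfl⟩
    calc M.edgeSet.ncard ≤ (Set.univ : Set (Sym2 V)).ncard :=
          Set.ncard_le_ncard (Set.subset_univ _) Set.finite_univ
      _ = Nat.card (Sym2 V) := Set.ncard_univ _
  obtain ⟨M, hM, hMcard⟩ := Nat.sSup_mem hne hbdd
  -- bound the sup
  rcases Set.eq_empty_or_nonempty {n | ∃ o, IsOrientation G o ∧ dirDomNum V o = n} with h | h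
  · unfold GammaD
    rw [h]
    simp
  · refine csSup_le h ?_
    rintro n ⟨o, ho, rfl⟩
    calc dirDomNum V o ≤ Fintype.card V - M.edgeSet.ncard :=
          dirDomNum_le_of_matching ho M hM
      _ = Fintype.card V - matchNum G := by rw [hMcard]; rfl
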